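/- Let x be in the Jacobson radical of a Noetherian ring R and M a finitely generated R-module. Then x is a nonzerodivisor on M if and only if for every t ≥ 1 the canonical map M/x^t M → colim_n M/x^n M (with transition maps given by multiplication by x^{t-s}) is injective; moreover this holds if and only if the map is injective for some t ≥ 1. -/
import Mathlib


/-- The transition maps `M/x^sM → M/x^tM`, for `s ≤ t`, of the direct system `{M/x^nM}`;
they are induced by multiplication by `x^{t-s}`. -/
noncomputable def powerQuotientMap {R : Type*} [CommRing R] (M : Type*) [AddCommGroup M]
    [Module R M] (x : R) (s t : ℕ) (h : s ≤ t) :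
    (M ⧸ (Ideal.span {x ^ s} • (⊤ : Submodule R M))) →ₗ[R]
      M ⧸ (Ideal.span {x ^ t} • (⊤ : Submodule R M)) :=
  Submodule.mapQ _ _ (LinearMap.lsmul R M (x ^ (t - s))) (by
    refine Submodule.smul_le.mpr ?_
    rintro r hr m -
    obtain ⟨c, rfl⟩ := Ideal.mem_span_singleton'.mp hr
    refine Submodule.mem_comap.mpr ?_
    have hxx : (x ^ (t - s)) • ((c * x ^ s) • m) = (c * x ^ t) • m := by
      rw [smul_smul, mul_comm (x ^ (t - s)), mul_assoc, ← pow_add, Nat.add_sub_cancel' h]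
    show (x ^ (t - s)) • ((c * x ^ s) • m) ∈ _
    rw [hxx]
    exact Submodule.smul_mem_smul (Ideal.mem_span_singleton'.mpr ⟨c, rfl⟩) trivial)

section Aux

open Pointwise

variable {R : Type*} [CommRing R] {M : Type*} [AddCommGroup M] [Module R M]

lemma powerQuotientMap_mk (x : R) {s t : ℕ} (h : s ≤ t) (m : M) :
    powerQuotientMap M x s t h (Submodule.Quotient.mk m) =
      Submodule.Quotient.mk (x ^ (t - s) • m) :=
  Submodule.mapQ_apply _ _ _ m

lemma mem_span_singleton_smul_top_iff {a : R} {m : M} :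
    m ∈ (Ideal.span {a} • (⊤ : Submodule R M)) ↔ ∃ n : M, a • n = m := by
  rw [Submodule.ideal_span_singleton_smul]
  constructor
  · intro h
    have h' : m ∈ (↑(a • (⊤ : Submodule R M)) : Set M) := h
    rw [Submodule.coe_pointwise_smul] at h'
    obtain ⟨n, -, hn⟩ := h'
    exact ⟨n, hn⟩
  · rintro ⟨n, rfl⟩
    exact Submodule.smul_mem_pointwise_smul n a ⊤ trivial

instance powerQuotientMap_directedSystem (x : R) :
    DirectedSystem (fun n => M ⧸ (Ideal.span {x ^ n} • (⊤ : Submodule R M)))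
      (fun s t h => powerQuotientMap M x s t h) where
  map_self i y := by
    obtain ⟨m, rfl⟩ := Submodule.Quotient.mk_surjective _ y
    rw [powerQuotientMap_mk, Nat.sub_self, pow_zero, one_smul]
  map_map k j i hij hjk y := by
    obtain ⟨m, rfl⟩ := Submodule.Quotient.mk_surjective _ y
    have hx : x ^ (k - j) • x ^ (j - i) • m = x ^ (k - i) • m := by
      rw [smul_smul, ← pow_add, show k - j + (j - i) = k - i by omega]
    rw [powerQuotientMap_mk, powerQuotientMap_mk, powerQuotientMap_mk, hx]

lemma injective_of_regular (x : R) (hreg : IsSMulRegular M x) (t : ℕ) :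
    Function.Injective
      (Module.DirectLimit.of R ℕ (fun n => M ⧸ (Ideal.span {x ^ n} • (⊤ : Submodule R M)))
        (powerQuotientMap M x) t) := by
  rw [injective_iff_map_eq_zero]
  intro y hy
  obtain ⟨m, rfl⟩ := Submodule.Quotient.mk_surjective _ y
  obtain ⟨j, htj, hj⟩ := Module.DirectLimit.of.zero_exact hy
  rw [powerQuotientMap_mk] at hj
  rw [Submodule.Quotient.mk_eq_zero] at hj ⊢
  obtain ⟨n, hn⟩ := mem_span_singleton_smul_top_iff.mp hj
  rw [mem_span_singleton_smul_top_iff]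
  have heq : x ^ (j - t) • m = x ^ (j - t) • (x ^ t • n) := by
    rw [← hn, smul_smul, ← pow_add, Nat.sub_add_cancel htj]
  exact ⟨n, ((hreg.pow (j - t)) heq).symm⟩

lemma regular_of_injective [IsNoetherianRing R] [Module.Finite R M]
    (x : R) (hx : x ∈ Ideal.jacobson (⊥ : Ideal R)) (t : ℕ) (ht : 1 ≤ t)
    (hinj : Function.Injective
      (Module.DirectLimit.of R ℕ (fun n => M ⧸ (Ideal.span {x ^ n} • (⊤ : Submodule R M)))
        (powerQuotientMap M x) t)) :
    IsSMulRegular M x := by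
  -- the submodule of x-power-torsion elements
  let N : Submodule R M :=
    { carrier := {m | ∃ k : ℕ, x ^ k • m = 0}
      zero_mem' := ⟨0, smul_zero _⟩
      add_mem' := by
        rintro a b ⟨k, hk⟩ ⟨l, hl⟩
        refine ⟨k + l, ?_⟩
        have h1 : x ^ (k + l) • a = 0 := by rw [pow_add, mul_comm, mul_smul, hk, smul_zero]
        have h2 : x ^ (k + l) • b = 0 := by rw [pow_add, mul_smul, hl, smul_zero]
        rw [smul_add, h1, h2, add_zero]
      smul_mem' := by
        rintro c a ⟨k, hk⟩
        exact ⟨k, by rw [smul_comm, hk, smul_zero]⟩ }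
  -- every x-power-torsion element lies in x^t M, with torsion witness
  have step : ∀ m ∈ N, ∃ m₁ ∈ N, x ^ t • m₁ = m := by
    rintro m ⟨k, hk⟩
    rcases Nat.eq_zero_or_pos k with hk0 | hkpos
    · subst hk0
      rw [pow_zero, one_smul] at hk
      exact ⟨0, N.zero_mem, by rw [smul_zero, hk]⟩
    have hof : Module.DirectLimit.of R ℕ
        (fun n => M ⧸ (Ideal.span {x ^ n} • (⊤ : Submodule R M)))
        (powerQuotientMap M x) t (Submodule.Quotient.mk m) = 0 := by
      have h1 : powerQuotientMap M x t (t + k) (Nat.le_add_right t k)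
          (Submodule.Quotient.mk m) = 0 := by
        rw [powerQuotientMap_mk, Nat.add_sub_cancel_left, hk, Submodule.Quotient.mk_zero]
      calc Module.DirectLimit.of R ℕ _ (powerQuotientMap M x) t (Submodule.Quotient.mk m)
          = Module.DirectLimit.of R ℕ _ (powerQuotientMap M x) (t + k)
            (powerQuotientMap M x t (t + k) (Nat.le_add_right t k)
              (Submodule.Quotient.mk m)) := (Module.DirectLimit.of_f).symm
        _ = 0 := by rw [h1, map_zero]
    have hmem : m ∈ (Ideal.span {x ^ t} • (⊤ : Submodule R M)) := by
      rw [← Submodule.Quotient.mk_eq_zero]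
      exact hinj (by rw [hof, map_zero])
    obtain ⟨m₁, hm₁⟩ := mem_span_singleton_smul_top_iff.mp hmem
    exact ⟨m₁, ⟨k + t, by rw [pow_add, mul_smul, hm₁, hk]⟩, hm₁⟩
  -- hence N ≤ (x) • N
  have hle : N ≤ (Ideal.span {x} : Ideal R) • N := by
    intro m hm
    obtain ⟨m₁, hm₁N, hm₁⟩ := step m hm
    have : m = x • (x ^ (t - 1) • m₁) := by
      rw [smul_smul, ← pow_succ', Nat.sub_add_cancel ht, hm₁]
    rw [this]
    refine Submodule.smul_mem_smul (Ideal.mem_span_singleton_self x) ?_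
    obtain ⟨k, hk⟩ := hm₁N
    exact ⟨k, by rw [smul_comm, hk, smul_zero]⟩
  -- Nakayama
  obtain ⟨r, hrI, hr⟩ := Submodule.exists_mem_and_smul_eq_self_of_fg_of_le_smul
    (Ideal.span {x}) N (IsNoetherian.noetherian N) hle
  have hrj : r ∈ Ideal.jacobson (⊥ : Ideal R) := by
    have hsub : Ideal.span {x} ≤ Ideal.jacobson ⊥ := by
      rw [Ideal.span_le, Set.singleton_subset_iff]; exact hx
    exact hsub hrI
  have hunit : IsUnit (1 - r) := by
    have := Ideal.mem_jacobson_bot.mp hrj (-1)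
    rwa [show r * (-1) + 1 = 1 - r by ring] at this
  -- conclude regularity
  intro a b hab
  have hab' : x • a = x • b := hab
  have hmN : a - b ∈ N := ⟨1, by rw [pow_one, smul_sub, hab', sub_self]⟩
  have hzero : (1 - r) • (a - b) = 0 := by
    rw [sub_smul, one_smul, hr _ hmN, sub_self]
  obtain ⟨u, hu⟩ := hunit
  have h2 : (u : R) • (a - b) = 0 := by rw [hu]; exact hzero
  have h3 : a - b = ((u⁻¹ : Rˣ) : R) • ((u : R) • (a - b)) := by
    rw [smul_smul, Units.inv_mul, one_smul]
  rw [h2, smul_zero] at h3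
  exact sub_eq_zero.mp h3

end Aux

/-- Let `x` be in the Jacobson radical of a Noetherian ring `R` and `M` a
finitely generated `R`-module. Then `x` is a nonzerodivisor on `M` iff for every `t ≥ 1` the
canonical map `M/x^tM → colim_n M/x^nM` is injective, iff this map is injective for some
`t ≥ 1`. -/
theorem isSMulRegular_iff_canonical_map_injective {R : Type*} [CommRing R] [IsNoetherianRing R]
    {M : Type*} [AddCommGroup M] [Module R M] [Module.Finite R M]
    (x : R) (hx : x ∈ Ideal.jacobson (⊥ : Ideal R)) :
    (IsSMulRegular M x ↔ ∀ t : ℕ, 1 ≤ t → Function.Injective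
        (Module.DirectLimit.of R ℕ (fun n => M ⧸ (Ideal.span {x ^ n} • (⊤ : Submodule R M)))
          (powerQuotientMap M x) t)) ∧
    (IsSMulRegular M x ↔ ∃ t : ℕ, 1 ≤ t ∧ Function.Injective
        (Module.DirectLimit.of R ℕ (fun n => M ⧸ (Ideal.span {x ^ n} • (⊤ : Submodule R M)))
          (powerQuotientMap M x) t)) := by
  constructor
  · exact ⟨fun h t _ => injective_of_regular x h t,
      fun h => regular_of_injective x hx 1 le_rfl (h 1 le_rfl)⟩
  · exact ⟨fun h => ⟨1, le_rfl, injective_of_regular x h 1⟩,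
      fun ⟨t, ht, h⟩ => regular_of_injective x hx t ht h⟩
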